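/- Two infinite types are coinductively equivalent if and only if all their finite truncations are: (∀k ∈ ℕ, cut(A,k) ≈_T cut(B,k)) ↔ A ≈_T B. -/

import Mathlib

namespace CAP

/-- μ-types: variables, constants, compounds D @ A, functions A ⊃ B, unions A ⊕ B, recursive μV.A -/
inductive MuTy : Type
  | tvar : ℕ → MuTy
  | tconst : ℕ → MuTy
  | comp : MuTy → MuTy → MuTy
  | arr : MuTy → MuTy → MuTy
  | union : MuTy → MuTy → MuTy
  | mu : ℕ → MuTy → MuTy
  deriving DecidableEq

namespace MuTy

/-- substitution of `B` for variable `V` -/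
def subst (V : ℕ) (B : MuTy) : MuTy → MuTy
  | tvar n => if n = V then B else tvar n
  | tconst c => tconst c
  | comp A₁ A₂ => comp (subst V B A₁) (subst V B A₂)
  | arr A₁ A₂ => arr (subst V B A₁) (subst V B A₂)
  | union A₁ A₂ => union (subst V B A₁) (subst V B A₂)
  | mu W A => if W = V then mu W A else mu W (subst V B A)

/-- `V` occurs in the type only under `comp` or `arr` (if at all) -/
def Guarded (V : ℕ) : MuTy → Prop
  | tvar n => n ≠ V
  | tconst _ => True
  | comp _ _ => True
  | arr _ _ => True
  | union A₁ A₂ => Guarded V A₁ ∧ Guarded V A₂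
  | mu W A => W = V ∨ Guarded V A

/-- contractive μ-types -/
def Contractive : MuTy → Prop
  | tvar _ => True
  | tconst _ => True
  | comp A₁ A₂ => Contractive A₁ ∧ Contractive A₂
  | arr A₁ A₂ => Contractive A₁ ∧ Contractive A₂
  | union A₁ A₂ => Contractive A₁ ∧ Contractive A₂
  | mu V A => Guarded V A ∧ Contractive A

/-- free variables -/
def fv : MuTy → Set ℕ
  | tvar n => {n}
  | tconst _ => ∅
  | comp A₁ A₂ => fv A₁ ∪ fv A₂
  | arr A₁ A₂ => fv A₁ ∪ fv A₂
  | union A₁ A₂ => fv A₁ ∪ fv A₂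
  | mu V A => fv A \ {V}

/-- number of consecutive μ binders at the root -/
def headMu : MuTy → ℕ
  | mu _ A => headMu A + 1
  | _ => 0

end MuTy

/-- inductive μ-type equivalence ≈ -/
inductive MuEq : MuTy → MuTy → Prop
  | refl (A) : MuEq A A
  | trans : MuEq A B → MuEq B C → MuEq A C
  | symm : MuEq A B → MuEq B A
  | arrCong : MuEq A A' → MuEq B B' → MuEq (.arr A B) (.arr A' B')
  | compCong : MuEq D D' → MuEq A A' → MuEq (.comp D A) (.comp D' A')
  | unionIdem (A) : MuEq (.union A A) A
  | unionComm (A B) : MuEq (.union A B) (.union B A)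
  | unionAssoc (A B C) : MuEq (.union A (.union B C)) (.union (.union A B) C)
  | unionCong : MuEq A A' → MuEq B B' → MuEq (.union A B) (.union A' B')
  | muCong : MuEq A B → MuEq (.mu V A) (.mu V B)
  | fold (V A) : MuEq (.mu V A) (MuTy.subst V (.mu V A) A)
  | contr : MuEq A (MuTy.subst V A B) → (MuTy.mu V B).Contractive → MuEq A (.mu V B)

/-- inductive μ-type subtyping, with a context of variable assumptions -/
inductive MuLe : Set (ℕ × ℕ) → MuTy → MuTy → Prop
  | refl (S A) : MuLe S A A
  | hyp : (V, W) ∈ S → MuLe S (.tvar V) (.tvar W)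
  | eq : MuEq A B → MuLe S A B
  | trans : MuLe S A B → MuLe S B C → MuLe S A C
  | compCong : MuLe S D D' → MuLe S A A' → MuLe S (.comp D A) (.comp D' A')
  | func : MuLe S A' A → MuLe S B B' → MuLe S (.arr A B) (.arr A' B')
  | unionL : MuLe S A C → MuLe S B C → MuLe S (.union A B) C
  | unionR1 : MuLe S A B → MuLe S A (.union B C)
  | unionR2 : MuLe S A C → MuLe S A (.union B C)
  | recRule : MuLe (insert (V, W) S) A B → W ∉ A.fv → V ∉ B.fv →
      MuLe S (.mu V A) (.mu W B)

/-- binary association trees of unions, used to express n-fold unions with arbitrary association -/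
inductive UTree : Type
  | leaf : MuTy → UTree
  | node : UTree → UTree → UTree

def UTree.toTy : UTree → MuTy
  | .leaf A => A
  | .node l r => .union l.toTy r.toTy

def UTree.leaves : UTree → List MuTy
  | .leaf A => [A]
  | .node l r => l.leaves ++ r.leaves

/-! ## Infinite types as trees -/

inductive Atom : Type
  | var : ℕ → Atom
  | const : ℕ → Atom
  | bullet : Atom
  deriving DecidableEq

inductive Lab : Type
  | atom : Atom → Lab
  | comp : Lab
  | arr : Lab
  | union : Lab
  deriving DecidableEq

def Lab.IsBinary : Lab → Prop
  | .comp => True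
  | .arr => True
  | .union => True
  | .atom _ => False

/-- possibly infinite trees: partial labelling of positions -/
abbrev ITree : Type := List Bool → Option Lab

namespace ITree

def child (A : ITree) (b : Bool) : ITree := fun π => A (b :: π)

/-- well-formed infinite types: rooted, prefix-closed with binary branching,
and no infinite branch consisting solely of ⊕ -/
def Wf (A : ITree) : Prop :=
  (A []).isSome ∧
  (∀ π b, (A (π ++ [b])).isSome ↔ ∃ l, A π = some l ∧ l.IsBinary) ∧
  (∀ (π : List Bool) (f : ℕ → Bool), ∃ n, A (π ++ (List.range n).map f) ≠ some Lab.union)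

end ITree

/-- maximal union decomposition: the list of non-union components of a tree -/
inductive UnionComps : ITree → List ITree → Prop
  | nonUnion (A : ITree) : A [] ≠ some Lab.union → UnionComps A [A]
  | union (A : ITree) (l r : List ITree) :
      A [] = some Lab.union →
      UnionComps (A.child false) l → UnionComps (A.child true) r →
      UnionComps A (l ++ r)

/-- the rule functional for coinductive tree equivalence -/
def EqF (R : ITree → ITree → Prop) (A B : ITree) : Prop :=
  (∃ a : Atom, A [] = some (Lab.atom a) ∧ B [] = some (Lab.atom a)) ∨
  (A [] = some Lab.comp ∧ B [] = some Lab.comp ∧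
    R (A.child false) (B.child false) ∧ R (A.child true) (B.child true)) ∨
  (A [] = some Lab.arr ∧ B [] = some Lab.arr ∧
    R (A.child false) (B.child false) ∧ R (A.child true) (B.child true)) ∨
  (∃ (la lb : List ITree), UnionComps A la ∧ UnionComps B lb ∧
    2 < la.length + lb.length ∧
    (∃ f : Fin la.length → Fin lb.length, ∀ i, R (la.get i) (lb.get (f i))) ∧
    (∃ g : Fin lb.length → Fin la.length, ∀ j, R (la.get (g j)) (lb.get j)))

/-- coinductive tree equivalence ≈_T : the greatest fixed point of `EqF` -/
def TreeEq (A B : ITree) : Prop :=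
  ∃ R : ITree → ITree → Prop, (∀ X Y, R X Y → EqF R X Y) ∧ R A B

/-- the rule functional for coinductive tree subtyping -/
def LeF (R : ITree → ITree → Prop) (A B : ITree) : Prop :=
  (∃ a : Atom, A [] = some (Lab.atom a) ∧ B [] = some (Lab.atom a)) ∨
  (A [] = some Lab.comp ∧ B [] = some Lab.comp ∧
    R (A.child false) (B.child false) ∧ R (A.child true) (B.child true)) ∨
  (A [] = some Lab.arr ∧ B [] = some Lab.arr ∧
    R (B.child false) (A.child false) ∧ R (A.child true) (B.child true)) ∨
  (∃ (la lb : List ITree), UnionComps A la ∧ UnionComps B lb ∧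
    2 < la.length + lb.length ∧
    (∃ f : Fin la.length → Fin lb.length, ∀ i, R (la.get i) (lb.get (f i))))

/-- coinductive tree subtyping ≤_T : the greatest fixed point of `LeF` -/
def TreeLe (A B : ITree) : Prop :=
  ∃ R : ITree → ITree → Prop, (∀ X Y, R X Y → LeF R X Y) ∧ R A B

open Classical in
/-- tree substitution of tree `B` for the variable `V` -/
noncomputable def substT (V : ℕ) (B A : ITree) : ITree := fun π =>
  if h : ∃ ps : List Bool × List Bool,
      π = ps.1 ++ ps.2 ∧ A ps.1 = some (Lab.atom (Atom.var V))
  then B (Classical.choose h).2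
  else A π

/-- the single-node tree consisting of an atom -/
def atomTree (a : Atom) : ITree := fun π => if π = [] then some (Lab.atom a) else none

/-- a tree with binary root label `l` and subtrees `A₁`, `A₂` -/
def binTree (l : Lab) (A₁ A₂ : ITree) : ITree := fun π =>
  match π with
  | [] => some l
  | false :: π' => A₁ π'
  | true :: π' => A₂ π'

/-- effective depth of a position: union nodes do not consume depth -/
def edepth (A : ITree) : List Bool → ℕ
  | [] => 0
  | b :: π => (if A [] = some Lab.union then 0 else 1) + edepth (A.child b) π

open Classical in
/-- truncation of a tree at depth `k`; cut points are replaced by the constant • -/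
noncomputable def cut (k : ℕ) (A : ITree) : ITree := fun π =>
  if ∀ p, p <+: π → p ≠ π → edepth A p < k then
    (if edepth A π < k then A π
     else if (A π).isSome then some (Lab.atom Atom.bullet) else none)
  else none

/-- labels of the tree interpretation of a μ-type (μ is unfolded completely) -/
inductive HasLab : MuTy → List Bool → Lab → Prop
  | tvar (n) : HasLab (.tvar n) [] (.atom (.var n))
  | tconst (c) : HasLab (.tconst c) [] (.atom (.const c))
  | compRoot (A B) : HasLab (.comp A B) [] .comp
  | compL : HasLab A π l → HasLab (.comp A B) (false :: π) l
  | compR : HasLab B π l → HasLab (.comp A B) (true :: π) l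
  | arrRoot (A B) : HasLab (.arr A B) [] .arr
  | arrL : HasLab A π l → HasLab (.arr A B) (false :: π) l
  | arrR : HasLab B π l → HasLab (.arr A B) (true :: π) l
  | unionRoot (A B) : HasLab (.union A B) [] .union
  | unionL : HasLab A π l → HasLab (.union A B) (false :: π) l
  | unionR : HasLab B π l → HasLab (.union A B) (true :: π) l
  | mu : HasLab (MuTy.subst V (.mu V A) A) π l → HasLab (.mu V A) π l

open Classical in
/-- the tree interpretation ⟦·⟧ of μ-types -/
noncomputable def interp (A : MuTy) : ITree := fun π =>
  if h : ∃ l, HasLab A π l then some (Classical.choose h) else none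

/-- application of a parallel substitution to a μ-type -/
def applyS (σ : ℕ → MuTy) : MuTy → MuTy
  | .tvar n => σ n
  | .tconst c => .tconst c
  | .comp A B => .comp (applyS σ A) (applyS σ B)
  | .arr A B => .arr (applyS σ A) (applyS σ B)
  | .union A B => .union (applyS σ A) (applyS σ B)
  | .mu V A => .mu V (applyS (Function.update σ V (.tvar V)) A)

/-- outermost type constructor (head μ binders are unfolded/skipped) -/
inductive HeadC : Type
  | hvar : ℕ → HeadC
  | hconst : ℕ → HeadC
  | hcomp : HeadC
  | harr : HeadC
  | hunion : HeadC
  deriving DecidableEq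

def headOf : MuTy → HeadC
  | .tvar n => .hvar n
  | .tconst c => .hconst c
  | .comp _ _ => .hcomp
  | .arr _ _ => .harr
  | .union _ _ => .hunion
  | .mu _ A => headOf A

/-- non-union μ-types: after unfolding head μ binders the top constructor is not ⊕ -/
def NonUnion : MuTy → Prop
  | .union _ _ => False
  | .mu _ A => NonUnion A
  | _ => True

/-- union contexts U ::= □ | U ⊕ A | A ⊕ U -/
inductive UCtx : Type
  | hole : UCtx
  | left : UCtx → MuTy → UCtx
  | right : MuTy → UCtx → UCtx

def UCtx.fill : UCtx → MuTy → MuTy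
  | .hole, A => A
  | .left U B, A => .union (U.fill A) B
  | .right B U, A => .union B (U.fill A)

end CAP

namespace CAP

open Classical

namespace ITree

lemma edepth_nil (A : ITree) : edepth A [] = 0 := rfl

lemma edepth_cons (A : ITree) (b : Bool) (π : List Bool) :
    edepth A (b :: π) = (if A [] = some Lab.union then 0 else 1) + edepth (A.child b) π := rfl

lemma edepth_le_append (A : ITree) (p q : List Bool) :
    edepth A p ≤ edepth A (p ++ q) := by
  induction p generalizing A with
  | nil => exact Nat.zero_le _
  | cons b p ih =>
    simp only [List.cons_append, edepth_cons]
    exact Nat.add_le_add_left (ih _) _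

lemma edepth_mono {A : ITree} {p q : List Bool} (h : p <+: q) :
    edepth A p ≤ edepth A q := by
  obtain ⟨t, rfl⟩ := h; exact edepth_le_append A p t

end ITree

open ITree

lemma cut_nil {k : ℕ} (hk : 1 ≤ k) (A : ITree) : cut k A [] = A [] := by
  have h1 : ∀ p : List Bool, p <+: [] → p ≠ [] → edepth A p < k := by
    intro p hp hne; exact absurd (List.prefix_nil.mp hp) hne
  have h2 : edepth A [] < k := hk
  simp only [cut, if_pos h1, if_pos h2]

lemma cut_zero_nil (A : ITree) :
    cut 0 A [] = if (A []).isSome then some (Lab.atom Atom.bullet) else none := by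
  have h1 : ∀ p : List Bool, p <+: [] → p ≠ [] → edepth A p < 0 := by
    intro p hp hne; exact absurd (List.prefix_nil.mp hp) hne
  simp only [cut, if_pos h1, if_neg (Nat.not_lt_zero _)]

lemma cut_child_union {k : ℕ} (hk : 1 ≤ k) {A : ITree} (hA : A [] = some Lab.union)
    (b : Bool) : (cut k A).child b = cut k (A.child b) := by
  funext π
  have hc : ∀ π' : List Bool, edepth A (b :: π') = edepth (A.child b) π' := by
    intro π'; rw [edepth_cons, if_pos hA, Nat.zero_add]
  have hcond : (∀ p, p <+: (b :: π) → p ≠ b :: π → edepth A p < k) ↔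
      (∀ p, p <+: π → p ≠ π → edepth (A.child b) p < k) := by
    constructor
    · intro h p hp hne
      have := h (b :: p) (by exact (List.prefix_cons_inj b).mpr hp)
        (by simpa using hne)
      rwa [hc] at this
    · intro h p hp hne
      match p, hp with
      | [], _ => exact hk
      | (c :: p'), hp =>
        obtain ⟨t, ht⟩ := hp
        have hcb : c = b := by injection ht
        subst hcb
        have hp' : p' <+: π := ⟨t, by injection ht⟩
        have hne' : p' ≠ π := by rintro rfl; exact hne rfl
        rw [hc]; exact h p' hp' hne'
  show cut k A (b :: π) = cut k (A.child b) π
  by_cases h : ∀ p, p <+: π → p ≠ π → edepth (A.child b) p < k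
  · simp only [cut, if_pos (hcond.mpr h), if_pos h, hc π]
    rfl
  · simp only [cut, if_neg (fun hh => h (hcond.mp hh)), if_neg h]

lemma cut_child_nonunion {k : ℕ} {A : ITree} (hA : A [] ≠ some Lab.union)
    (b : Bool) : (cut (k+1) A).child b = cut k (A.child b) := by
  funext π
  have hc : ∀ π' : List Bool, edepth A (b :: π') = 1 + edepth (A.child b) π' := by
    intro π'; rw [edepth_cons, if_neg hA]
  have hcond : (∀ p, p <+: (b :: π) → p ≠ b :: π → edepth A p < k + 1) ↔
      (∀ p, p <+: π → p ≠ π → edepth (A.child b) p < k) := by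
    constructor
    · intro h p hp hne
      have := h (b :: p) ((List.prefix_cons_inj b).mpr hp) (by simpa using hne)
      rw [hc] at this; omega
    · intro h p hp hne
      match p, hp with
      | [], _ => simp [edepth_nil]
      | (c :: p'), hp =>
        obtain ⟨t, ht⟩ := hp
        have hcb : c = b := by injection ht
        subst hcb
        have hp' : p' <+: π := ⟨t, by injection ht⟩
        have hne' : p' ≠ π := by rintro rfl; exact hne rfl
        rw [hc]
        have := h p' hp' hne'; omega
  have hval : edepth A (b :: π) < k + 1 ↔ edepth (A.child b) π < k := by
    rw [hc]; omega
  show cut (k+1) A (b :: π) = cut k (A.child b) π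
  by_cases h : ∀ p, p <+: π → p ≠ π → edepth (A.child b) p < k
  · simp only [cut, if_pos (hcond.mpr h), if_pos h]
    by_cases h2 : edepth (A.child b) π < k
    · simp only [if_pos h2, if_pos (hval.mpr h2)]; rfl
    · simp only [if_neg h2, if_neg (fun hh => h2 (hval.mp hh))]; rfl
  · simp only [cut, if_neg (fun hh => h (hcond.mp hh)), if_neg h]
lemma edepth_cut {k : ℕ} {A : ITree} {p : List Bool}
    (h : ∀ r, r <+: p → r ≠ p → edepth A r < k) :
    edepth (cut k A) p = edepth A p := by
  induction p generalizing A k with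
  | nil => rfl
  | cons b rest ih =>
    have hk : 1 ≤ k := by
      have := h [] (by simp) (by simp)
      exact this
    have hroot : cut k A [] = A [] := cut_nil hk A
    by_cases hu : A [] = some Lab.union
    · rw [edepth_cons, edepth_cons, hroot, if_pos hu, cut_child_union hk hu]
      congr 1
      apply ih
      intro r hr hne
      have := h (b :: r) ((List.prefix_cons_inj b).mpr hr) (by simpa using hne)
      rwa [edepth_cons, if_pos hu, Nat.zero_add] at this
    · obtain ⟨j, rfl⟩ : ∃ j, k = j + 1 := ⟨k - 1, by omega⟩
      rw [edepth_cons, edepth_cons, hroot, if_neg hu, cut_child_nonunion hu]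
      congr 1
      apply ih
      intro r hr hne
      have := h (b :: r) ((List.prefix_cons_inj b).mpr hr) (by simpa using hne)
      rw [edepth_cons, if_neg hu] at this; omega

lemma cut_apply_pos {k : ℕ} {A : ITree} {π : List Bool}
    (h : ∀ p, p <+: π → p ≠ π → edepth A p < k) :
    cut k A π = if edepth A π < k then A π
      else if (A π).isSome then some (Lab.atom Atom.bullet) else none := by
  simp only [cut, if_pos h]

lemma cut_apply_neg {k : ℕ} {A : ITree} {π : List Bool}
    (h : ¬ ∀ p, p <+: π → p ≠ π → edepth A p < k) :
    cut k A π = none := by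
  simp only [cut, if_neg h]

lemma cut_cut {k k' : ℕ} (hkk : k ≤ k') (A : ITree) :
    cut k (cut k' A) = cut k A := by
  funext π
  by_cases h2 : ∀ p, p <+: π → p ≠ π → edepth A p < k
  · have hall : ∀ p, p <+: π → edepth (cut k' A) p = edepth A p := by
      intro p hp
      apply edepth_cut
      intro r hr hrne
      have hrπ : r <+: π := hr.trans hp
      have hrneπ : r ≠ π := by
        rintro rfl
        exact hrne (hp.eq_of_length (le_antisymm hp.length_le hr.length_le)).symm
      exact lt_of_lt_of_le (h2 r hrπ hrneπ) hkk
    have hC1 : ∀ p, p <+: π → p ≠ π → edepth (cut k' A) p < k := by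
      intro p hp hne; rw [hall p hp]; exact h2 p hp hne
    have h2' : ∀ p, p <+: π → p ≠ π → edepth A p < k' :=
      fun p hp hne => lt_of_lt_of_le (h2 p hp hne) hkk
    rw [cut_apply_pos hC1, cut_apply_pos h2, cut_apply_pos h2',
      hall π List.prefix_rfl]
    by_cases hd : edepth A π < k
    · rw [if_pos hd, if_pos hd, if_pos (lt_of_lt_of_le hd hkk)]
    · rw [if_neg hd, if_neg hd]
      by_cases hd' : edepth A π < k'
      · rw [if_pos hd']
      · rw [if_neg hd']
        by_cases hs : (A π).isSome
        · simp [hs]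
        · simp [hs]
  · rw [cut_apply_neg h2]
    push_neg at h2
    obtain ⟨p, hp, hpne, hge⟩ := h2
    have hex : ∃ n, n < π.length ∧ k ≤ edepth A (π.take n) := by
      refine ⟨p.length, ?_, ?_⟩
      · exact lt_of_le_of_ne hp.length_le (fun hl => hpne (hp.eq_of_length hl))
      · rw [← List.prefix_iff_eq_take.mp hp]; omega
    have hn₀lt : Nat.find hex < π.length := (Nat.find_spec hex).1
    have hn₀ge : k ≤ edepth A (π.take (Nat.find hex)) := (Nat.find_spec hex).2
    set n₀ := Nat.find hex with hn₀def
    set q₀ : List Bool := π.take n₀ with hq₀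
    have hq₀len : q₀.length = n₀ := by
      rw [hq₀, List.length_take]; omega
    have hq₀pre : q₀ <+: π := List.take_prefix _ _
    have hq₀ne : q₀ ≠ π := by
      intro h; rw [h] at hq₀len; omega
    have hmin : ∀ r, r <+: q₀ → r ≠ q₀ → edepth A r < k := by
      intro r hr hrne
      have hrlen : r.length < n₀ := by
        have h1 := hr.length_le
        rw [hq₀len] at h1
        rcases lt_or_eq_of_le h1 with h | h
        · exact h
        · exact absurd (hr.eq_of_length (by rw [hq₀len]; exact h)) hrne
      have hrtake : r = π.take r.length :=
        List.prefix_iff_eq_take.mp (hr.trans hq₀pre)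
      have h3 := Nat.find_min hex hrlen
      push_neg at h3
      have := h3 (by omega)
      rw [← hrtake] at this
      omega
    have heq : edepth (cut k' A) q₀ = edepth A q₀ := by
      apply edepth_cut
      intro r hr hrne
      exact lt_of_lt_of_le (hmin r hr hrne) hkk
    have hbad : ¬ (∀ p, p <+: π → p ≠ π → edepth (cut k' A) p < k) := by
      intro hC
      have h4 := hC q₀ hq₀pre hq₀ne
      rw [heq] at h4
      omega
    rw [cut_apply_neg hbad]
lemma EqF.mono {R S : ITree → ITree → Prop} (h : ∀ X Y, R X Y → S X Y)
    {A B : ITree} : EqF R A B → EqF S A B := by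
  rintro (⟨a, h1, h2⟩ | ⟨h1, h2, h3, h4⟩ | ⟨h1, h2, h3, h4⟩ |
    ⟨la, lb, h1, h2, h3, ⟨f, hf⟩, ⟨g, hg⟩⟩)
  · exact Or.inl ⟨a, h1, h2⟩
  · exact Or.inr (Or.inl ⟨h1, h2, h _ _ h3, h _ _ h4⟩)
  · exact Or.inr (Or.inr (Or.inl ⟨h1, h2, h _ _ h3, h _ _ h4⟩))
  · exact Or.inr (Or.inr (Or.inr ⟨la, lb, h1, h2, h3,
      ⟨f, fun i => h _ _ (hf i)⟩, ⟨g, fun j => h _ _ (hg j)⟩⟩))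

lemma TreeEq.dest {A B : ITree} (h : TreeEq A B) : EqF TreeEq A B := by
  obtain ⟨R, hR, hAB⟩ := h
  exact EqF.mono (fun X Y hXY => ⟨R, hR, hXY⟩) (hR _ _ hAB)

lemma TreeEq.of_eqF {A B : ITree} (h : EqF TreeEq A B) : TreeEq A B := by
  refine ⟨fun X Y => TreeEq X Y ∨ (X = A ∧ Y = B), ?_, Or.inr ⟨rfl, rfl⟩⟩
  rintro X Y (hXY | ⟨rfl, rfl⟩)
  · exact EqF.mono (fun _ _ => Or.inl) hXY.dest
  · exact EqF.mono (fun _ _ => Or.inl) h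

lemma TreeEq.symm {A B : ITree} (h : TreeEq A B) : TreeEq B A := by
  refine ⟨fun X Y => TreeEq Y X, ?_, h⟩
  intro X Y hXY
  rcases hXY.dest with (⟨a, h1, h2⟩ | ⟨h1, h2, h3, h4⟩ | ⟨h1, h2, h3, h4⟩ |
    ⟨la, lb, h1, h2, h3, ⟨f, hf⟩, ⟨g, hg⟩⟩)
  · exact Or.inl ⟨a, h2, h1⟩
  · exact Or.inr (Or.inl ⟨h2, h1, h3, h4⟩)
  · exact Or.inr (Or.inr (Or.inl ⟨h2, h1, h3, h4⟩))
  · exact Or.inr (Or.inr (Or.inr ⟨lb, la, h2, h1, by omega, ⟨g, hg⟩, ⟨f, hf⟩⟩))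

namespace UnionComps

lemma ne_nil {A : ITree} {l : List ITree} (h : UnionComps A l) : l ≠ [] := by
  induction h with
  | nonUnion => simp
  | union A l r _ _ _ ihl ihr => simp [ihl]

lemma length_pos {A : ITree} {l : List ITree} (h : UnionComps A l) : 1 ≤ l.length := by
  have := h.ne_nil
  cases l with
  | nil => simp at this
  | cons => simp

lemma eq_single {A : ITree} {l : List ITree} (h : UnionComps A l)
    (hA : A [] ≠ some Lab.union) : l = [A] := by
  cases h with
  | nonUnion => rfl
  | union => exact absurd ‹A [] = some Lab.union› hA

lemma two_le_length {A : ITree} {l : List ITree} (h : UnionComps A l)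
    (hA : A [] = some Lab.union) : 2 ≤ l.length := by
  cases h with
  | nonUnion _ h' => exact absurd hA h'
  | union A l r _ hl hr =>
    have := hl.length_pos
    have := hr.length_pos
    simp only [List.length_append]
    omega

lemma mem_root {A : ITree} {l : List ITree} (h : UnionComps A l) :
    ∀ X ∈ l, X [] ≠ some Lab.union := by
  induction h with
  | nonUnion A hA => intro X hX; rw [List.mem_singleton.mp hX]; exact hA
  | union A l r _ _ _ ihl ihr =>
    intro X hX
    rcases List.mem_append.mp hX with h | h
    · exact ihl X h
    · exact ihr X h

lemma unique {A : ITree} {l l' : List ITree} (h : UnionComps A l)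
    (h' : UnionComps A l') : l = l' := by
  induction h generalizing l' with
  | nonUnion A hA => exact (h'.eq_single hA).symm
  | union A l r hA hl hr ihl ihr =>
    cases h' with
    | nonUnion _ h'' => exact absurd hA h''
    | union _ l' r' _ hl' hr' => rw [ihl hl', ihr hr']

lemma cut {k : ℕ} (hk : 1 ≤ k) {A : ITree} {l : List ITree} (h : UnionComps A l) :
    UnionComps (CAP.cut k A) (l.map (CAP.cut k)) := by
  induction h with
  | nonUnion A hA =>
    exact UnionComps.nonUnion _ (by rw [cut_nil hk]; exact hA)
  | union A l r hA hl hr ihl ihr =>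
    rw [List.map_append]
    exact UnionComps.union _ _ _ (by rw [cut_nil hk]; exact hA)
      (by rw [cut_child_union hk hA]; exact ihl)
      (by rw [cut_child_union hk hA]; exact ihr)

end UnionComps

lemma TreeEq.isSome_left {A B : ITree} (h : TreeEq A B) : (A []).isSome := by
  rcases h.dest with (⟨a, h1, _⟩ | ⟨h1, _⟩ | ⟨h1, _⟩ |
    ⟨la, lb, hla, hlb, hlen, ⟨f, hf⟩, _⟩)
  · rw [h1]; rfl
  · rw [h1]; rfl
  · rw [h1]; rfl
  · by_cases hA : A [] = some Lab.union
    · rw [hA]; rfl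
    · have hla1 : la = [A] := hla.eq_single hA
      subst hla1
      have hlb2 : 2 ≤ lb.length := by simp at hlen; omega
      let i0 : Fin ([A] : List ITree).length := ⟨0, by simp⟩
      have hZ := hf i0
      have hZroot : (lb.get (f i0)) [] ≠ some Lab.union :=
        hlb.mem_root _ (lb.get_mem _)
      have hgetA : ([A] : List ITree).get i0 = A := rfl
      rcases hZ.dest with (⟨a, h1, _⟩ | ⟨h1, _⟩ | ⟨h1, _⟩ |
        ⟨la', lb', hla', hlb', hlen', _, _⟩)
      · rw [hgetA] at h1; rw [h1]; rfl
      · rw [hgetA] at h1; rw [h1]; rfl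
      · rw [hgetA] at h1; rw [h1]; rfl
      · have e1 : la' = [[A].get i0] := hla'.eq_single (by rw [hgetA]; exact hA)
        have e2 : lb' = [lb.get (f i0)] := hlb'.eq_single hZroot
        rw [e1, e2] at hlen'
        simp at hlen'

lemma TreeEq.isSome_right {A B : ITree} (h : TreeEq A B) : (B []).isSome :=
  h.symm.isSome_left
lemma treeEq_cut {U V : ITree} (h : TreeEq U V) (k : ℕ) :
    TreeEq (cut k U) (cut k V) := by
  refine ⟨fun X Y => ∃ (k : ℕ) (A B : ITree),
    X = cut k A ∧ Y = cut k B ∧ TreeEq A B, ?_, k, U, V, rfl, rfl, h⟩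
  rintro X Y ⟨k, A, B, rfl, rfl, hAB⟩
  match k with
  | 0 =>
    refine Or.inl ⟨Atom.bullet, ?_, ?_⟩
    · rw [cut_zero_nil, if_pos hAB.isSome_left]
    · rw [cut_zero_nil, if_pos hAB.isSome_right]
  | (k+1) =>
    have hk : 1 ≤ k + 1 := by omega
    rcases hAB.dest with (⟨a, h1, h2⟩ | ⟨h1, h2, h3, h4⟩ | ⟨h1, h2, h3, h4⟩ |
      ⟨la, lb, hla, hlb, hlen, ⟨f, hf⟩, ⟨g, hg⟩⟩)
    · exact Or.inl ⟨a, by rw [cut_nil hk]; exact h1, by rw [cut_nil hk]; exact h2⟩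
    · have hA : A [] ≠ some Lab.union := by rw [h1]; simp
      have hB : B [] ≠ some Lab.union := by rw [h2]; simp
      refine Or.inr (Or.inl ⟨by rw [cut_nil hk]; exact h1, by rw [cut_nil hk]; exact h2,
        ?_, ?_⟩)
      · rw [cut_child_nonunion hA, cut_child_nonunion hB]
        exact ⟨k, _, _, rfl, rfl, h3⟩
      · rw [cut_child_nonunion hA, cut_child_nonunion hB]
        exact ⟨k, _, _, rfl, rfl, h4⟩
    · have hA : A [] ≠ some Lab.union := by rw [h1]; simp
      have hB : B [] ≠ some Lab.union := by rw [h2]; simp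
      refine Or.inr (Or.inr (Or.inl ⟨by rw [cut_nil hk]; exact h1,
        by rw [cut_nil hk]; exact h2, ?_, ?_⟩))
      · rw [cut_child_nonunion hA, cut_child_nonunion hB]
        exact ⟨k, _, _, rfl, rfl, h3⟩
      · rw [cut_child_nonunion hA, cut_child_nonunion hB]
        exact ⟨k, _, _, rfl, rfl, h4⟩
    · refine Or.inr (Or.inr (Or.inr ⟨la.map (cut (k+1)), lb.map (cut (k+1)),
        hla.cut hk, hlb.cut hk, by simpa using hlen, ?_, ?_⟩))
      · refine ⟨fun i => Fin.cast (by simp) (f (Fin.cast (by simp) i)), fun i => ?_⟩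
        refine ⟨k+1, la.get (Fin.cast (by simp) i), lb.get (f (Fin.cast (by simp) i)),
          ?_, ?_, hf _⟩
        · simp [List.get_eq_getElem]
        · simp [List.get_eq_getElem]
      · refine ⟨fun j => Fin.cast (by simp) (g (Fin.cast (by simp) j)), fun j => ?_⟩
        refine ⟨k+1, la.get (g (Fin.cast (by simp) j)), lb.get (Fin.cast (by simp) j),
          ?_, ?_, hg _⟩
        · simp [List.get_eq_getElem]
        · simp [List.get_eq_getElem]
lemma ITree.Wf.child {A : ITree} (hA : A.Wf) {l : Lab} (hl : A [] = some l)
    (hb : l.IsBinary) (b : Bool) : (A.child b).Wf := by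
  refine ⟨?_, ?_, ?_⟩
  · have := (hA.2.1 [] b).mpr ⟨l, hl, hb⟩
    simpa [ITree.child] using this
  · intro π c
    have := hA.2.1 (b :: π) c
    simpa [ITree.child] using this
  · intro π f
    have := hA.2.2 (b :: π) f
    simpa [ITree.child] using this

lemma UnionComps.wf {A : ITree} {l : List ITree} (h : UnionComps A l)
    (hA : A.Wf) : ∀ X ∈ l, X.Wf := by
  induction h with
  | nonUnion A _ => intro X hX; rw [List.mem_singleton.mp hX]; exact hA
  | union A l r hu _ _ ihl ihr =>
    intro X hX
    rcases List.mem_append.mp hX with h | h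
    · exact ihl (hA.child hu trivial _) X h
    · exact ihr (hA.child hu trivial _) X h

open Classical in
noncomputable def pickBad (X : ITree) : Bool :=
  if ∃ l, UnionComps (X.child false) l then true else false

noncomputable def badSeq (A : ITree) : ℕ → ITree
  | 0 => A
  | n+1 => (badSeq A n).child (pickBad (badSeq A n))

lemma unionComps_exists {A : ITree} (hA : A.Wf) : ∃ l, UnionComps A l := by
  by_contra h
  have key : ∀ X : ITree, (¬ ∃ l, UnionComps X l) →
      X [] = some Lab.union ∧ ¬ ∃ l, UnionComps (X.child (pickBad X)) l := by
    intro X hX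
    have hroot : X [] = some Lab.union := by
      by_contra h'
      exact hX ⟨[X], UnionComps.nonUnion X h'⟩
    refine ⟨hroot, ?_⟩
    unfold pickBad
    by_cases hf : ∃ l, UnionComps (X.child false) l
    · rw [if_pos hf]
      intro ht
      obtain ⟨lf, hlf⟩ := hf
      obtain ⟨lt, hlt⟩ := ht
      exact hX ⟨lf ++ lt, UnionComps.union X lf lt hroot hlf hlt⟩
    · rw [if_neg hf]
      exact hf
  have hbad : ∀ n, ¬ ∃ l, UnionComps (badSeq A n) l := by
    intro n
    induction n with
    | zero => exact h
    | succ n ih => exact (key _ ih).2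
  have hpath : ∀ n (π : List Bool),
      badSeq A n π = A ((List.range n).map (fun i => pickBad (badSeq A i)) ++ π) := by
    intro n
    induction n with
    | zero => intro π; simp [badSeq]
    | succ n ih =>
      intro π
      show badSeq A n (pickBad (badSeq A n) :: π) = _
      rw [ih]
      congr 1
      rw [List.range_succ, List.map_append, List.append_assoc]
      rfl
  obtain ⟨n, hn⟩ := hA.2.2 [] (fun i => pickBad (badSeq A i))
  apply hn
  rw [List.nil_append]
  have := hpath n []
  rw [List.append_nil] at this
  rw [← this]
  exact (key _ (hbad n)).1
lemma treeEq_of_forall_cut {A B : ITree} (hA : A.Wf) (hB : B.Wf)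
    (h : ∀ k, TreeEq (cut k A) (cut k B)) : TreeEq A B := by
  have hmono : ∀ (U V : ITree) (k k' : ℕ), k ≤ k' →
      TreeEq (cut k' U) (cut k' V) → TreeEq (cut k U) (cut k V) := by
    intro U V k k' hk h'
    have := treeEq_cut h' k
    rwa [cut_cut hk, cut_cut hk] at this
  refine ⟨fun X Y => X.Wf ∧ Y.Wf ∧ ∀ k, TreeEq (cut k X) (cut k Y), ?_, hA, hB, h⟩
  rintro X Y ⟨hX, hY, hXY⟩
  by_cases hu : X [] = some Lab.union ∨ Y [] = some Lab.union
  · -- union case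
    obtain ⟨la, hla⟩ := unionComps_exists hX
    obtain ⟨lb, hlb⟩ := unionComps_exists hY
    have hlen : 2 < la.length + lb.length := by
      have h1 := hla.length_pos
      have h2 := hlb.length_pos
      rcases hu with hu | hu
      · have := hla.two_le_length hu; omega
      · have := hlb.two_le_length hu; omega
    have key : ∀ k : ℕ, ∃ (f : Fin la.length → Fin lb.length)
        (g : Fin lb.length → Fin la.length),
        (∀ i, TreeEq (cut (k+1) (la.get i)) (cut (k+1) (lb.get (f i)))) ∧
        (∀ j, TreeEq (cut (k+1) (la.get (g j))) (cut (k+1) (lb.get j))) := by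
      intro k
      have hk : 1 ≤ k + 1 := by omega
      rcases (hXY (k+1)).dest with (⟨a, h1, h2⟩ | ⟨h1, h2, _⟩ | ⟨h1, h2, _⟩ |
        ⟨la', lb', hla', hlb', hlen', ⟨f', hf'⟩, ⟨g', hg'⟩⟩)
      · rw [cut_nil hk] at h1 h2
        rcases hu with hu | hu
        · rw [hu] at h1; simp at h1
        · rw [hu] at h2; simp at h2
      · rw [cut_nil hk] at h1 h2
        rcases hu with hu | hu
        · rw [hu] at h1; simp at h1
        · rw [hu] at h2; simp at h2
      · rw [cut_nil hk] at h1 h2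
        rcases hu with hu | hu
        · rw [hu] at h1; simp at h1
        · rw [hu] at h2; simp at h2
      · have ea : la' = la.map (cut (k+1)) := (hla.cut hk).unique hla' |>.symm
        have eb : lb' = lb.map (cut (k+1)) := (hlb.cut hk).unique hlb' |>.symm
        subst ea eb
        refine ⟨fun i => Fin.cast (by simp) (f' (Fin.cast (by simp) i)),
          fun j => Fin.cast (by simp) (g' (Fin.cast (by simp) j)), ?_, ?_⟩
        · intro i
          have := hf' (Fin.cast (by simp) i)
          simpa [List.get_eq_getElem] using this
        · intro j
          have := hg' (Fin.cast (by simp) j)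
          simpa [List.get_eq_getElem] using this
    choose F G hF hG using key
    obtain ⟨fg, hfg⟩ := Finite.exists_infinite_fiber (fun k => (F k, G k))
    have hinf : {k | (F k, G k) = fg}.Infinite := Set.infinite_coe_iff.mp hfg
    refine Or.inr (Or.inr (Or.inr ⟨la, lb, hla, hlb, hlen, ⟨fg.1, ?_⟩, ⟨fg.2, ?_⟩⟩))
    · intro i
      refine ⟨hla.wf hX _ (List.get_mem _ _), hlb.wf hY _ (List.get_mem _ _), ?_⟩
      intro k
      obtain ⟨k', hk'mem, hk'gt⟩ := hinf.exists_gt k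
      have hFk : F k' = fg.1 := by
        have : (F k', G k') = fg := hk'mem
        rw [← this]
      have := hF k' i
      rw [hFk] at this
      exact hmono _ _ k (k'+1) (by omega) this
    · intro j
      refine ⟨hla.wf hX _ (List.get_mem _ _), hlb.wf hY _ (List.get_mem _ _), ?_⟩
      intro k
      obtain ⟨k', hk'mem, hk'gt⟩ := hinf.exists_gt k
      have hGk : G k' = fg.2 := by
        have : (F k', G k') = fg := hk'mem
        rw [← this]
      have := hG k' j
      rw [hGk] at this
      exact hmono _ _ k (k'+1) (by omega) this
  · push_neg at hu
    obtain ⟨hXu, hYu⟩ := hu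
    have hcase : ∀ k : ℕ, EqF TreeEq (cut (k+1) X) (cut (k+1) Y) :=
      fun k => (hXY (k+1)).dest
    have hnu : ∀ k : ℕ,
        (∃ a, X [] = some (Lab.atom a) ∧ Y [] = some (Lab.atom a)) ∨
        (X [] = some Lab.comp ∧ Y [] = some Lab.comp ∧
          TreeEq (cut k (X.child false)) (cut k (Y.child false)) ∧
          TreeEq (cut k (X.child true)) (cut k (Y.child true))) ∨
        (X [] = some Lab.arr ∧ Y [] = some Lab.arr ∧
          TreeEq (cut k (X.child false)) (cut k (Y.child false)) ∧
          TreeEq (cut k (X.child true)) (cut k (Y.child true))) := by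
      intro k
      have hk : 1 ≤ k + 1 := by omega
      rcases hcase k with (⟨a, h1, h2⟩ | ⟨h1, h2, h3, h4⟩ | ⟨h1, h2, h3, h4⟩ |
        ⟨la', lb', hla', hlb', hlen', _⟩)
      · rw [cut_nil hk] at h1 h2
        exact Or.inl ⟨a, h1, h2⟩
      · rw [cut_nil hk] at h1 h2
        rw [cut_child_nonunion hXu, cut_child_nonunion hYu] at h3 h4
        exact Or.inr (Or.inl ⟨h1, h2, h3, h4⟩)
      · rw [cut_nil hk] at h1 h2
        rw [cut_child_nonunion hXu, cut_child_nonunion hYu] at h3 h4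
        exact Or.inr (Or.inr ⟨h1, h2, h3, h4⟩)
      · exfalso
        have e1 : la' = [cut (k+1) X] := hla'.eq_single (by rw [cut_nil hk]; exact hXu)
        have e2 : lb' = [cut (k+1) Y] := hlb'.eq_single (by rw [cut_nil hk]; exact hYu)
        rw [e1, e2] at hlen'
        simp at hlen'
    rcases hnu 0 with (⟨a, h1, h2⟩ | ⟨h1, h2, _⟩ | ⟨h1, h2, _⟩)
    · exact Or.inl ⟨a, h1, h2⟩
    · refine Or.inr (Or.inl ⟨h1, h2, ⟨hX.child h1 trivial _, hY.child h2 trivial _, ?_⟩,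
        ⟨hX.child h1 trivial _, hY.child h2 trivial _, ?_⟩⟩)
      · intro k
        rcases hnu k with (⟨a, h1', _⟩ | ⟨_, _, h3, _⟩ | ⟨h1', _⟩)
        · rw [h1] at h1'; simp at h1'
        · exact h3
        · rw [h1] at h1'; simp at h1'
      · intro k
        rcases hnu k with (⟨a, h1', _⟩ | ⟨_, _, _, h4⟩ | ⟨h1', _⟩)
        · rw [h1] at h1'; simp at h1'
        · exact h4
        · rw [h1] at h1'; simp at h1'
    · refine Or.inr (Or.inr (Or.inl ⟨h1, h2, ⟨hX.child h1 trivial _, hY.child h2 trivial _, ?_⟩,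
        ⟨hX.child h1 trivial _, hY.child h2 trivial _, ?_⟩⟩))
      · intro k
        rcases hnu k with (⟨a, h1', _⟩ | ⟨h1', _⟩ | ⟨_, _, h3, _⟩)
        · rw [h1] at h1'; simp at h1'
        · rw [h1] at h1'; simp at h1'
        · exact h3
      · intro k
        rcases hnu k with (⟨a, h1', _⟩ | ⟨h1', _⟩ | ⟨_, _, _, h4⟩)
        · rw [h1] at h1'; simp at h1'
        · rw [h1] at h1'; simp at h1'
        · exact h4


/-- two infinite types are coinductively equivalent iff all their
finite truncations are. -/
theorem stmt10 (A B : ITree) (hA : A.Wf) (hB : B.Wf) :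
    (∀ k : ℕ, TreeEq (cut k A) (cut k B)) ↔ TreeEq A B := by
  exact ⟨fun h => treeEq_of_forall_cut hA hB h, fun h k => treeEq_cut h k⟩

end CAP
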